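/- Let r1, k1, r2, k2, p, b, e > 0 and m ∈ (0,1), and set c = e·p·(1−m)·k1/(1 + b·(1−m)·k1) and K = (k2/r2)·(r2 + c). Let y : ℝ → ℝ be differentiable on [0,∞) with y(t) > 0 and y'(t) ≤ r2·y(t)·(1 − y(t)/k2) + c·y(t) for all t ≥ 0. If y(0) ≤ K, then y(t) ≤ K for all t ≥ 0. -/

import Mathlib

/-- Predator boundedness in the non-harvesting regime: with
`c = e*p*(1-m)*k1 / (1 + b*(1-m)*k1)` and `K = (k2/r2) * (r2 + c)`, if
`y' ≤ r2*y*(1 - y/k2) + c*y` on `[0,∞)` with `y > 0` and `y 0 ≤ K`,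
then `y t ≤ K` for all `t ≥ 0`. -/
theorem stmt_2 (r1 k1 r2 k2 p b e m : ℝ)
    (hr1 : 0 < r1) (hk1 : 0 < k1) (hr2 : 0 < r2) (hk2 : 0 < k2)
    (hp : 0 < p) (hb : 0 < b) (he : 0 < e) (hm : m ∈ Set.Ioo (0 : ℝ) 1)
    (c K : ℝ)
    (hc : c = e * p * (1 - m) * k1 / (1 + b * (1 - m) * k1))
    (hK : K = (k2 / r2) * (r2 + c))
    (y y' : ℝ → ℝ)
    (hderiv : ∀ t : ℝ, 0 ≤ t → HasDerivAt y (y' t) t)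
    (hpos : ∀ t : ℝ, 0 ≤ t → 0 < y t)
    (hineq : ∀ t : ℝ, 0 ≤ t → y' t ≤ r2 * y t * (1 - y t / k2) + c * y t)
    (hinit : y 0 ≤ K) :
    ∀ t : ℝ, 0 ≤ t → y t ≤ K := by
  obtain ⟨hm0, hm1⟩ := hm
  have h1m : 0 < 1 - m := by linarith
  have hcpos : 0 < c := by
    rw [hc]
    apply div_pos <;> positivity
  have hKr : r2 * K = k2 * (r2 + c) := by
    rw [hK]; field_simp
  intro t ht
  -- show y t ≤ K + ε for every ε > 0
  have key : ∀ ε : ℝ, 0 < ε → y t ≤ K + ε := by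
    intro ε hε
    have := image_le_of_deriv_right_lt_deriv_boundary
      (f := y) (f' := y') (a := 0) (b := t)
      (fun x hx => ((hderiv x hx.1).continuousAt).continuousWithinAt)
      (fun x hx => ((hderiv x hx.1).hasDerivWithinAt).mono (Set.Ici_subset_Ici.mpr le_rfl))
      (B := fun _ => K + ε) (B' := fun _ => 0)
      (show y 0 ≤ K + ε by linarith)
      (fun x => hasDerivAt_const x (K + ε))
      (fun x hx hyx => by
        have hx0 := hx.1
        have hy := hineq x hx0
        have hypos := hpos x hx0
        rw [hyx] at hy hypos
        have hk2' : k2 ≠ 0 := ne_of_gt hk2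
        have heq : r2 * (K + ε) * (1 - (K + ε) / k2) + c * (K + ε)
            = -((K + ε) * (r2 * ε) / k2) := by
          field_simp
          linear_combination (-(1:ℝ)) * hKr
        have hneg : 0 < (K + ε) * (r2 * ε) / k2 :=
          div_pos (mul_pos hypos (mul_pos hr2 hε)) hk2
        linarith)
    exact this ⟨ht, le_refl t⟩
  by_contra h
  push_neg at h
  have := key ((y t - K) / 2) (by linarith)
  linarith
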